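/- arXiv:0806.4352 — 2 statements merged into one kernel-verified Lean document; each statement's English description precedes it below -/
import Mathlib

section
/- Let a, b, c, d be real numbers with b ≠ 0 and d ≠ 0, let a₀, a₁, a₂ : ℝ → ℝ, let U ⊆ ℝ be open, and let y : ℝ → ℝ be five times continuously differentiable on U with y⁽⁵⁾(x) + a₂(x)y″(x) + a₁(x)y′(x) + a₀(x)y(x) = 0 for all x ∈ U. Define φ(x̄) = (x̄ − c(1 + a·x̄))/(b(1 + a·x̄)), t(x̄) = 1 + a·x̄, and ȳ(x̄) = d·t(x̄)⁴·y(φ(x̄)). Then for every x̄ with t(x̄) ≠ 0 and φ(x̄) ∈ U, one has ȳ⁽⁵⁾(x̄) + ā₂(x̄)ȳ″(x̄) + ā₁(x̄)ȳ′(x̄) + ā₀(x̄)ȳ(x̄) = 0, where ā₂(x̄) = a₂(φ(x̄))/(b³ t(x̄)⁶), ā₁(x̄) = a₁(φ(x̄))/(b⁴ t(x̄)⁸) − 6a·a₂(φ(x̄))/(b³ t(x̄)⁷), and ā₀(x̄) = a₀(φ(x̄))/(b⁵ t(x̄)¹⁰) − 4a·a₁(φ(x̄))/(b⁴ t(x̄)⁹)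 + 12a²·a₂(φ(x̄))/(b³ t(x̄)⁸). -/
/-- The point transformation of the independent variable:
`φ(x̄) = (x̄ − c(1 + a x̄)) / (b(1 + a x̄))`. -/
noncomputable def phi (a b c : ℝ) (x : ℝ) : ℝ :=
  (x - c * (1 + a * x)) / (b * (1 + a * x))

/-- The transformed dependent variable for the fifth-order canonical form:
`ȳ(x̄) = d (1+a x̄)⁴ y(φ(x̄))`. -/
noncomputable def ybar (a b c d : ℝ) (y : ℝ → ℝ) (x : ℝ) : ℝ :=
  d * (1 + a * x) ^ 4 * y (phi a b c x)

/- Auxiliary material for the proof of `stmt_5`. -/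

lemma SIT5.hasDerivAt_iteratedDeriv_of_contDiffOn5 {f : ℝ → ℝ} {s : Set ℝ}
    (hs : IsOpen s) (hf : ContDiffOn ℝ 5 f s) {m : ℕ} (hm : m < 5) {z : ℝ} (hz : z ∈ s) :
    HasDerivAt (iteratedDeriv m f) (iteratedDeriv (m + 1) f z) z := by
  have hdo : DifferentiableOn ℝ (iteratedDerivWithin m f s) s :=
    hf.differentiableOn_iteratedDerivWithin (by exact_mod_cast hm) hs.uniqueDiffOn
  have heq : ∀ w ∈ s, iteratedDerivWithin m f s w = iteratedDeriv m f w := by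
    intro w hw
    rw [iteratedDerivWithin_eq_iteratedFDerivWithin, iteratedDeriv_eq_iteratedFDeriv,
      iteratedFDerivWithin_of_isOpen m hs hw]
  have hdiff : DifferentiableAt ℝ (iteratedDeriv m f) z := by
    have h1 : DifferentiableAt ℝ (iteratedDerivWithin m f s) z :=
      (hdo z hz).differentiableAt (hs.mem_nhds hz)
    apply h1.congr_of_eventuallyEq
    filter_upwards [hs.mem_nhds hz] with w hw
    exact (heq w hw).symm
  rw [iteratedDeriv_succ]
  exact hdiff.hasDerivAt

lemma SIT5.hasDerivAt_t (a : ℝ) (x : ℝ) :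
    HasDerivAt (fun w : ℝ => 1 + a * w) a x := by
  simpa using ((hasDerivAt_id x).const_mul a).const_add 1

lemma SIT5.hasDerivAt_phi (a b c : ℝ) (hb : b ≠ 0) (x : ℝ) (hx : 1 + a * x ≠ 0) :
    HasDerivAt (phi a b c) (1 / (b * (1 + a * x) ^ 2)) x := by
  have h1 : HasDerivAt (fun w : ℝ => w - c * (1 + a * w)) (1 - c * a) x :=
    (hasDerivAt_id x).sub ((SIT5.hasDerivAt_t a x).const_mul c)
  have h2 : HasDerivAt (fun w : ℝ => b * (1 + a * w)) (b * a) x :=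
    (SIT5.hasDerivAt_t a x).const_mul b
  have h3 := h1.div h2 (mul_ne_zero hb hx)
  have hval : (1 : ℝ) / (b * (1 + a * x) ^ 2)
      = ((1 - c * a) * (b * (1 + a * x)) - (x - c * (1 + a * x)) * (b * a))
        / (b * (1 + a * x)) ^ 2 := by
    field_simp
    ring
  rw [hval]
  exact h3

lemma SIT5.hasDerivAt_comp_phi (a b c : ℝ) (hb : b ≠ 0) {U : Set ℝ} (hU : IsOpen U)
    {y : ℝ → ℝ} (hy : ContDiffOn ℝ 5 y U) {x : ℝ} (hx1 : 1 + a * x ≠ 0)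
    (hx2 : phi a b c x ∈ U) (m : ℕ) (hm : m < 5) :
    HasDerivAt (fun w => iteratedDeriv m y (phi a b c w))
      (iteratedDeriv (m + 1) y (phi a b c x) / (b * (1 + a * x) ^ 2)) x := by
  have h := (SIT5.hasDerivAt_iteratedDeriv_of_contDiffOn5 hU hy hm hx2).comp x
    (SIT5.hasDerivAt_phi a b c hb x hx1)
  rw [mul_one_div] at h
  exact h

noncomputable def SIT5.F1 (a b c d : ℝ) (y : ℝ → ℝ) (x : ℝ) : ℝ :=
  (4 * a * d * (1 + a * x) ^ 5 * y (phi a b c x)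
    + d / b * (1 + a * x) ^ 4 * deriv y (phi a b c x)) / (1 + a * x) ^ 2

noncomputable def SIT5.F2 (a b c d : ℝ) (y : ℝ → ℝ) (x : ℝ) : ℝ :=
  (12 * a ^ 2 * d * (1 + a * x) ^ 6 * y (phi a b c x)
    + 6 * a * d / b * (1 + a * x) ^ 5 * deriv y (phi a b c x)
    + d / b ^ 2 * (1 + a * x) ^ 4 * iteratedDeriv 2 y (phi a b c x)) / (1 + a * x) ^ 4

noncomputable def SIT5.F3 (a b c d : ℝ) (y : ℝ → ℝ) (x : ℝ) : ℝ :=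
  (24 * a ^ 3 * d * (1 + a * x) ^ 7 * y (phi a b c x)
    + 18 * a ^ 2 * d / b * (1 + a * x) ^ 6 * deriv y (phi a b c x)
    + 6 * a * d / b ^ 2 * (1 + a * x) ^ 5 * iteratedDeriv 2 y (phi a b c x)
    + d / b ^ 3 * (1 + a * x) ^ 4 * iteratedDeriv 3 y (phi a b c x)) / (1 + a * x) ^ 6

noncomputable def SIT5.F4 (a b c d : ℝ) (y : ℝ → ℝ) (x : ℝ) : ℝ :=
  (24 * a ^ 4 * d * (1 + a * x) ^ 8 * y (phi a b c x)
    + 24 * a ^ 3 * d / b * (1 + a * x) ^ 7 * deriv y (phi a b c x)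
    + 12 * a ^ 2 * d / b ^ 2 * (1 + a * x) ^ 6 * iteratedDeriv 2 y (phi a b c x)
    + 4 * a * d / b ^ 3 * (1 + a * x) ^ 5 * iteratedDeriv 3 y (phi a b c x)
    + d / b ^ 4 * (1 + a * x) ^ 4 * iteratedDeriv 4 y (phi a b c x)) / (1 + a * x) ^ 8

section SIT5Lemmas

variable {a b c d : ℝ} {U : Set ℝ} {y : ℝ → ℝ} {x : ℝ}

lemma SIT5.hY0d (hb : b ≠ 0) (hU : IsOpen U) (hy : ContDiffOn ℝ 5 y U)
    (hx1 : 1 + a * x ≠ 0) (hx2 : phi a b c x ∈ U) :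
    HasDerivAt (fun w => y (phi a b c w))
      (deriv y (phi a b c x) / (b * (1 + a * x) ^ 2)) x := by
  have h := SIT5.hasDerivAt_comp_phi a b c hb hU hy hx1 hx2 0 (by norm_num)
  simpa [iteratedDeriv_zero, iteratedDeriv_one] using h

lemma SIT5.hY1d (hb : b ≠ 0) (hU : IsOpen U) (hy : ContDiffOn ℝ 5 y U)
    (hx1 : 1 + a * x ≠ 0) (hx2 : phi a b c x ∈ U) :
    HasDerivAt (fun w => deriv y (phi a b c w))
      (iteratedDeriv 2 y (phi a b c x) / (b * (1 + a * x) ^ 2)) x := by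
  have h := SIT5.hasDerivAt_comp_phi a b c hb hU hy hx1 hx2 1 (by norm_num)
  simpa [iteratedDeriv_one] using h

lemma SIT5.hY2d (hb : b ≠ 0) (hU : IsOpen U) (hy : ContDiffOn ℝ 5 y U)
    (hx1 : 1 + a * x ≠ 0) (hx2 : phi a b c x ∈ U) :
    HasDerivAt (fun w => iteratedDeriv 2 y (phi a b c w))
      (iteratedDeriv 3 y (phi a b c x) / (b * (1 + a * x) ^ 2)) x := by
  have h := SIT5.hasDerivAt_comp_phi a b c hb hU hy hx1 hx2 2 (by norm_num)
  simpa using h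

lemma SIT5.hY3d (hb : b ≠ 0) (hU : IsOpen U) (hy : ContDiffOn ℝ 5 y U)
    (hx1 : 1 + a * x ≠ 0) (hx2 : phi a b c x ∈ U) :
    HasDerivAt (fun w => iteratedDeriv 3 y (phi a b c w))
      (iteratedDeriv 4 y (phi a b c x) / (b * (1 + a * x) ^ 2)) x := by
  have h := SIT5.hasDerivAt_comp_phi a b c hb hU hy hx1 hx2 3 (by norm_num)
  simpa using h

lemma SIT5.hY4d (hb : b ≠ 0) (hU : IsOpen U) (hy : ContDiffOn ℝ 5 y U)
    (hx1 : 1 + a * x ≠ 0) (hx2 : phi a b c x ∈ U) :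
    HasDerivAt (fun w => iteratedDeriv 4 y (phi a b c w))
      (iteratedDeriv 5 y (phi a b c x) / (b * (1 + a * x) ^ 2)) x := by
  have h := SIT5.hasDerivAt_comp_phi a b c hb hU hy hx1 hx2 4 (by norm_num)
  simpa using h

lemma SIT5.hasDerivAt_ybar (hb : b ≠ 0) (hU : IsOpen U) (hy : ContDiffOn ℝ 5 y U)
    (hx1 : 1 + a * x ≠ 0) (hx2 : phi a b c x ∈ U) :
    HasDerivAt (ybar a b c d y) (SIT5.F1 a b c d y x) x := by
  unfold ybar SIT5.F1
  have hT := SIT5.hasDerivAt_t a x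
  have h := ((hT.fun_pow 4).const_mul d).fun_mul (SIT5.hY0d hb hU hy hx1 hx2)
  refine h.congr_deriv ?_
  field_simp
  ring

lemma SIT5.hasDerivAt_F1 (hb : b ≠ 0) (hU : IsOpen U) (hy : ContDiffOn ℝ 5 y U)
    (hx1 : 1 + a * x ≠ 0) (hx2 : phi a b c x ∈ U) :
    HasDerivAt (SIT5.F1 a b c d y) (SIT5.F2 a b c d y x) x := by
  unfold SIT5.F1 SIT5.F2
  have hT := SIT5.hasDerivAt_t a x
  have hnum := (((hT.fun_pow 5).const_mul (4 * a * d)).fun_mul (SIT5.hY0d hb hU hy hx1 hx2)).fun_add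
    (((hT.fun_pow 4).const_mul (d / b)).fun_mul (SIT5.hY1d hb hU hy hx1 hx2))
  have h := hnum.fun_div (hT.fun_pow 2) (pow_ne_zero 2 hx1)
  refine h.congr_deriv ?_
  field_simp
  ring

lemma SIT5.hasDerivAt_F2 (hb : b ≠ 0) (hU : IsOpen U) (hy : ContDiffOn ℝ 5 y U)
    (hx1 : 1 + a * x ≠ 0) (hx2 : phi a b c x ∈ U) :
    HasDerivAt (SIT5.F2 a b c d y) (SIT5.F3 a b c d y x) x := by
  unfold SIT5.F2 SIT5.F3
  have hT := SIT5.hasDerivAt_t a x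
  have hnum := ((((hT.fun_pow 6).const_mul (12 * a ^ 2 * d)).fun_mul (SIT5.hY0d hb hU hy hx1 hx2)).fun_add
    (((hT.fun_pow 5).const_mul (6 * a * d / b)).fun_mul (SIT5.hY1d hb hU hy hx1 hx2))).fun_add
    (((hT.fun_pow 4).const_mul (d / b ^ 2)).fun_mul (SIT5.hY2d hb hU hy hx1 hx2))
  have h := hnum.fun_div (hT.fun_pow 4) (pow_ne_zero 4 hx1)
  refine h.congr_deriv ?_
  field_simp
  ring

lemma SIT5.hasDerivAt_F3 (hb : b ≠ 0) (hU : IsOpen U) (hy : ContDiffOn ℝ 5 y U)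
    (hx1 : 1 + a * x ≠ 0) (hx2 : phi a b c x ∈ U) :
    HasDerivAt (SIT5.F3 a b c d y) (SIT5.F4 a b c d y x) x := by
  unfold SIT5.F3 SIT5.F4
  have hT := SIT5.hasDerivAt_t a x
  have hnum := (((((hT.fun_pow 7).const_mul (24 * a ^ 3 * d)).fun_mul (SIT5.hY0d hb hU hy hx1 hx2)).fun_add
    (((hT.fun_pow 6).const_mul (18 * a ^ 2 * d / b)).fun_mul (SIT5.hY1d hb hU hy hx1 hx2))).fun_add
    (((hT.fun_pow 5).const_mul (6 * a * d / b ^ 2)).fun_mul (SIT5.hY2d hb hU hy hx1 hx2))).fun_add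
    (((hT.fun_pow 4).const_mul (d / b ^ 3)).fun_mul (SIT5.hY3d hb hU hy hx1 hx2))
  have h := hnum.fun_div (hT.fun_pow 6) (pow_ne_zero 6 hx1)
  refine h.congr_deriv ?_
  field_simp
  ring

lemma SIT5.hasDerivAt_F4 (hb : b ≠ 0) (hU : IsOpen U) (hy : ContDiffOn ℝ 5 y U)
    (hx1 : 1 + a * x ≠ 0) (hx2 : phi a b c x ∈ U) :
    HasDerivAt (SIT5.F4 a b c d y)
      (d * iteratedDeriv 5 y (phi a b c x) / (b ^ 5 * (1 + a * x) ^ 6)) x := by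
  unfold SIT5.F4
  have hT := SIT5.hasDerivAt_t a x
  have hnum := ((((((hT.fun_pow 8).const_mul (24 * a ^ 4 * d)).fun_mul (SIT5.hY0d hb hU hy hx1 hx2)).fun_add
    (((hT.fun_pow 7).const_mul (24 * a ^ 3 * d / b)).fun_mul (SIT5.hY1d hb hU hy hx1 hx2))).fun_add
    (((hT.fun_pow 6).const_mul (12 * a ^ 2 * d / b ^ 2)).fun_mul (SIT5.hY2d hb hU hy hx1 hx2))).fun_add
    (((hT.fun_pow 5).const_mul (4 * a * d / b ^ 3)).fun_mul (SIT5.hY3d hb hU hy hx1 hx2))).fun_add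
    (((hT.fun_pow 4).const_mul (d / b ^ 4)).fun_mul (SIT5.hY4d hb hU hy hx1 hx2))
  have h := hnum.fun_div (hT.fun_pow 8) (pow_ne_zero 8 hx1)
  refine h.congr_deriv ?_
  field_simp
  ring

end SIT5Lemmas

/-- the structure invariance transformation for
`y⁽⁵⁾ + a₂ y″ + a₁ y′ + a₀ y = 0`: the transformed function
`ȳ(x̄) = d (1+a x̄)⁴ y(φ(x̄))` satisfies `ȳ⁽⁵⁾ + ā₂ ȳ″ + ā₁ ȳ′ + ā₀ ȳ = 0` with
`ā₂ = (a₂∘φ)/(b³ t⁶)`, `ā₁ = (a₁∘φ)/(b⁴ t⁸) − 6a (a₂∘φ)/(b³ t⁷)` and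
`ā₀ = (a₀∘φ)/(b⁵ t¹⁰) − 4a (a₁∘φ)/(b⁴ t⁹) + 12a² (a₂∘φ)/(b³ t⁸)`,
where `t(x̄) = 1 + a x̄`. -/
theorem stmt_5 (a b c d : ℝ) (hb : b ≠ 0) (hd : d ≠ 0)
    (a0 a1 a2 : ℝ → ℝ) (U : Set ℝ) (hU : IsOpen U) (y : ℝ → ℝ)
    (hy : ContDiffOn ℝ 5 y U)
    (hode : ∀ x ∈ U,
      iteratedDeriv 5 y x + a2 x * iteratedDeriv 2 y x
        + a1 x * deriv y x + a0 x * y x = 0)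
    (xb : ℝ) (ht : 1 + a * xb ≠ 0) (hφ : phi a b c xb ∈ U) :
    iteratedDeriv 5 (ybar a b c d y) xb
      + (a2 (phi a b c xb) / (b ^ 3 * (1 + a * xb) ^ 6))
          * iteratedDeriv 2 (ybar a b c d y) xb
      + (a1 (phi a b c xb) / (b ^ 4 * (1 + a * xb) ^ 8)
          - 6 * a * a2 (phi a b c xb) / (b ^ 3 * (1 + a * xb) ^ 7))
          * deriv (ybar a b c d y) xb
      + (a0 (phi a b c xb) / (b ^ 5 * (1 + a * xb) ^ 10)
          - 4 * a * a1 (phi a b c xb) / (b ^ 4 * (1 + a * xb) ^ 9)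
          + 12 * a ^ 2 * a2 (phi a b c xb) / (b ^ 3 * (1 + a * xb) ^ 8))
          * ybar a b c d y xb = 0 := by
  -- the open set on which everything is valid
  set V : Set ℝ := {x : ℝ | 1 + a * x ≠ 0} ∩ phi a b c ⁻¹' U with hVdef
  have hcont : Continuous fun x : ℝ => 1 + a * x := by continuity
  have hW : IsOpen {x : ℝ | 1 + a * x ≠ 0} := isOpen_ne_fun hcont continuous_const
  have hphiCont : ContinuousOn (phi a b c) {x : ℝ | 1 + a * x ≠ 0} := by
    unfold phi
    exact ContinuousOn.div ((continuous_id.sub (continuous_const.mul hcont : Continuous fun x : ℝ => c * (1 + a * x))).continuousOn)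
      ((continuous_const.mul hcont : Continuous fun x : ℝ => b * (1 + a * x)).continuousOn) (fun x hx => mul_ne_zero hb hx)
  have hVopen : IsOpen V := hphiCont.isOpen_inter_preimage hW hU
  have hxbV : xb ∈ V := ⟨ht, hφ⟩
  have hV1 : ∀ x ∈ V, 1 + a * x ≠ 0 := fun x hx => hx.1
  have hV2 : ∀ x ∈ V, phi a b c x ∈ U := fun x hx => hx.2
  -- the iterated derivatives of ybar on V
  have hI1 : ∀ x ∈ V, deriv (ybar a b c d y) x = SIT5.F1 a b c d y x := fun x hx =>
    (SIT5.hasDerivAt_ybar hb hU hy (hV1 x hx) (hV2 x hx)).deriv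
  have hI2 : ∀ x ∈ V, iteratedDeriv 2 (ybar a b c d y) x = SIT5.F2 a b c d y x := by
    intro x hx
    rw [show (2 : ℕ) = 1 + 1 from rfl, iteratedDeriv_succ, iteratedDeriv_one]
    have h1 : deriv (deriv (ybar a b c d y)) x = deriv (SIT5.F1 a b c d y) x := by
      apply Filter.EventuallyEq.deriv_eq
      filter_upwards [hVopen.mem_nhds hx] with w hw
      exact hI1 w hw
    rw [h1, (SIT5.hasDerivAt_F1 hb hU hy (hV1 x hx) (hV2 x hx)).deriv]
  have hI3 : ∀ x ∈ V, iteratedDeriv 3 (ybar a b c d y) x = SIT5.F3 a b c d y x := by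
    intro x hx
    rw [show (3 : ℕ) = 2 + 1 from rfl, iteratedDeriv_succ]
    have h1 : deriv (iteratedDeriv 2 (ybar a b c d y)) x = deriv (SIT5.F2 a b c d y) x := by
      apply Filter.EventuallyEq.deriv_eq
      filter_upwards [hVopen.mem_nhds hx] with w hw
      exact hI2 w hw
    rw [h1, (SIT5.hasDerivAt_F2 hb hU hy (hV1 x hx) (hV2 x hx)).deriv]
  have hI4 : ∀ x ∈ V, iteratedDeriv 4 (ybar a b c d y) x = SIT5.F4 a b c d y x := by
    intro x hx
    rw [show (4 : ℕ) = 3 + 1 from rfl, iteratedDeriv_succ]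
    have h1 : deriv (iteratedDeriv 3 (ybar a b c d y)) x = deriv (SIT5.F3 a b c d y) x := by
      apply Filter.EventuallyEq.deriv_eq
      filter_upwards [hVopen.mem_nhds hx] with w hw
      exact hI3 w hw
    rw [h1, (SIT5.hasDerivAt_F3 hb hU hy (hV1 x hx) (hV2 x hx)).deriv]
  have hI5 : iteratedDeriv 5 (ybar a b c d y) xb
      = d * iteratedDeriv 5 y (phi a b c xb) / (b ^ 5 * (1 + a * xb) ^ 6) := by
    rw [show (5 : ℕ) = 4 + 1 from rfl, iteratedDeriv_succ]
    have h1 : deriv (iteratedDeriv 4 (ybar a b c d y)) xb = deriv (SIT5.F4 a b c d y) xb := by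
      apply Filter.EventuallyEq.deriv_eq
      filter_upwards [hVopen.mem_nhds hxbV] with w hw
      exact hI4 w hw
    rw [h1, (SIT5.hasDerivAt_F4 hb hU hy ht hφ).deriv]
  -- assemble
  have hode' := hode (phi a b c xb) hφ
  have hz5 : iteratedDeriv 5 y (phi a b c xb)
      = -(a2 (phi a b c xb) * iteratedDeriv 2 y (phi a b c xb)
          + a1 (phi a b c xb) * deriv y (phi a b c xb)
          + a0 (phi a b c xb) * y (phi a b c xb)) := by linarith
  rw [hI5, hI2 xb hxbV, hI1 xb hxbV, hz5]
  unfold SIT5.F1 SIT5.F2 ybar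
  field_simp
  ring
end

section
/- Let a, b, c be real numbers with b ≠ 0, let a₀ : ℝ → ℝ be twice continuously differentiable, define φ(x̄) = (x̄ − c(1 + a·x̄))/(b(1 + a·x̄)), t(x̄) = 1 + a·x̄, and ā₀(x̄) = a₀(φ(x̄))/(b³ t(x̄)⁶) on {x̄ : t(x̄) ≠ 0}. Then for every x̄ with t(x̄) ≠ 0 and a₀(φ(x̄)) ≠ 0, one has (ā₀″(x̄) − (7/6)ā₀′(x̄)²/ā₀(x̄))³/ā₀(x̄)⁵ = (a₀″(φ(x̄)) − (7/6)a₀′(φ(x̄))²/a₀(φ(x̄)))³/a₀(φ(x̄))⁵. -/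
noncomputable def abar0 (a b c : ℝ) (a0 : ℝ → ℝ) (x : ℝ) : ℝ :=
  a0 (phi a b c x) / (b ^ 3 * (1 + a * x) ^ 6)

noncomputable def D1 (a b c : ℝ) (a0 : ℝ → ℝ) (x : ℝ) : ℝ :=
  deriv a0 (phi a b c x) / (b ^ 4 * (1 + a * x) ^ 8)
    - 6 * a * a0 (phi a b c x) / (b ^ 3 * (1 + a * x) ^ 7)

lemma phi_hasDerivAt (a b c : ℝ) (hb : b ≠ 0) {x : ℝ} (ht : 1 + a * x ≠ 0) :
    HasDerivAt (phi a b c) (1 / (b * (1 + a * x) ^ 2)) x := by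
  have hden : b * (1 + a * x) ≠ 0 := mul_ne_zero hb ht
  have h1 : HasDerivAt (fun x : ℝ => x - c * (1 + a * x)) (1 - c * (a * 1)) x :=
    (hasDerivAt_id x).sub ((((hasDerivAt_id x).const_mul a).const_add 1).const_mul c)
  have h2 : HasDerivAt (fun x : ℝ => b * (1 + a * x)) (b * (a * 1)) x :=
    (((hasDerivAt_id x).const_mul a).const_add 1).const_mul b
  have := h1.div h2 hden
  refine this.congr_deriv ?_
  field_simp
  ring

lemma abar0_hasDerivAt (a b c : ℝ) (hb : b ≠ 0) (a0 : ℝ → ℝ) (ha0 : ContDiff ℝ 2 a0)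
    {x : ℝ} (ht : 1 + a * x ≠ 0) :
    HasDerivAt (abar0 a b c a0) (D1 a b c a0 x) x := by
  have hdiff : Differentiable ℝ a0 := ha0.differentiable (by norm_num)
  have hf : HasDerivAt (fun y => a0 (phi a b c y))
      (deriv a0 (phi a b c x) * (1 / (b * (1 + a * x) ^ 2))) x :=
    (hdiff.differentiableAt.hasDerivAt).comp x (phi_hasDerivAt a b c hb ht)
  have hg : HasDerivAt (fun y : ℝ => b ^ 3 * (1 + a * y) ^ 6)
      (b ^ 3 * (6 * (1 + a * x) ^ 5 * (a * 1))) x := by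
    exact ((((hasDerivAt_id x).const_mul a).const_add 1).pow 6).const_mul (b ^ 3)
  have hgne : b ^ 3 * (1 + a * x) ^ 6 ≠ 0 :=
    mul_ne_zero (pow_ne_zero _ hb) (pow_ne_zero _ ht)
  have := hf.div hg hgne
  refine this.congr_deriv ?_
  unfold D1
  field_simp

lemma deriv_abar0_eventually (a b c : ℝ) (hb : b ≠ 0) (a0 : ℝ → ℝ) (ha0 : ContDiff ℝ 2 a0)
    {x : ℝ} (ht : 1 + a * x ≠ 0) :
    deriv (abar0 a b c a0) =ᶠ[nhds x] D1 a b c a0 := by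
  have hopen : IsOpen {y : ℝ | 1 + a * y ≠ 0} := by
    have hc : Continuous fun y : ℝ => 1 + a * y := by continuity
    exact isOpen_compl_singleton.preimage hc
  filter_upwards [hopen.mem_nhds ht] with y hy
  exact (abar0_hasDerivAt a b c hb a0 ha0 hy).deriv

set_option maxHeartbeats 2000000 in
/-- the invariant `Ψ₃^{3,1} = (a₀″ − (7/6)a₀′²/a₀)³ / a₀⁵` of the
canonical form `y′′′ + a₀ y = 0` is an absolute invariant of the structure
invariance group. -/
theorem stmt_11 (a b c : ℝ) (hb : b ≠ 0) (a0 : ℝ → ℝ) (ha0 : ContDiff ℝ 2 a0) :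
    ∀ xb : ℝ, 1 + a * xb ≠ 0 → a0 (phi a b c xb) ≠ 0 →
      (iteratedDeriv 2 (abar0 a b c a0) xb
          - (7 / 6) * (deriv (abar0 a b c a0) xb) ^ 2 / abar0 a b c a0 xb) ^ 3
        / (abar0 a b c a0 xb) ^ 5
      = (iteratedDeriv 2 a0 (phi a b c xb)
          - (7 / 6) * (deriv a0 (phi a b c xb)) ^ 2 / a0 (phi a b c xb)) ^ 3
        / (a0 (phi a b c xb)) ^ 5 := by
  intro xb ht hf
  have hdiff : Differentiable ℝ a0 := ha0.differentiable (by norm_num)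
  have hdiff' : Differentiable ℝ (deriv a0) := by
    have h := ha0.differentiable_iteratedDeriv 1 (by norm_num)
    simpa [iteratedDeriv_one] using h
  -- first derivative
  have hD1 : deriv (abar0 a b c a0) xb = D1 a b c a0 xb :=
    (abar0_hasDerivAt a b c hb a0 ha0 ht).deriv
  -- second derivative
  set t := 1 + a * xb with htdef
  have hD1deriv : HasDerivAt (D1 a b c a0)
      (iteratedDeriv 2 a0 (phi a b c xb) / (b ^ 5 * t ^ 10)
        - 14 * a * deriv a0 (phi a b c xb) / (b ^ 4 * t ^ 9)
        + 42 * a ^ 2 * a0 (phi a b c xb) / (b ^ 3 * t ^ 8)) xb := by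
    have hphi := phi_hasDerivAt a b c hb ht
    have hf1 : HasDerivAt (fun y => deriv a0 (phi a b c y))
        (deriv (deriv a0) (phi a b c xb) * (1 / (b * t ^ 2))) xb :=
      (hdiff'.differentiableAt.hasDerivAt).comp xb hphi
    have hf0 : HasDerivAt (fun y => a0 (phi a b c y))
        (deriv a0 (phi a b c xb) * (1 / (b * t ^ 2))) xb :=
      (hdiff.differentiableAt.hasDerivAt).comp xb hphi
    have hg8 : HasDerivAt (fun y : ℝ => b ^ 4 * (1 + a * y) ^ 8)
        (b ^ 4 * (8 * (1 + a * xb) ^ 7 * (a * 1))) xb :=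
      ((((hasDerivAt_id xb).const_mul a).const_add 1).pow 8).const_mul (b ^ 4)
    have hg7 : HasDerivAt (fun y : ℝ => b ^ 3 * (1 + a * y) ^ 7)
        (b ^ 3 * (7 * (1 + a * xb) ^ 6 * (a * 1))) xb :=
      ((((hasDerivAt_id xb).const_mul a).const_add 1).pow 7).const_mul (b ^ 3)
    have hg8ne : b ^ 4 * (1 + a * xb) ^ 8 ≠ 0 :=
      mul_ne_zero (pow_ne_zero _ hb) (pow_ne_zero _ ht)
    have hg7ne : b ^ 3 * (1 + a * xb) ^ 7 ≠ 0 :=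
      mul_ne_zero (pow_ne_zero _ hb) (pow_ne_zero _ ht)
    have h1 := hf1.div hg8 hg8ne
    have h2 := ((hf0.const_mul (6 * a)).div hg7 hg7ne)
    have hcomb := h1.sub h2
    have : D1 a b c a0 = fun y =>
        deriv a0 (phi a b c y) / (b ^ 4 * (1 + a * y) ^ 8)
          - 6 * a * a0 (phi a b c y) / (b ^ 3 * (1 + a * y) ^ 7) := rfl
    rw [this]
    refine hcomb.congr_deriv ?_
    have h2eq : iteratedDeriv 2 a0 = deriv (deriv a0) := by
      ext y
      rw [iteratedDeriv_succ, iteratedDeriv_one]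
    rw [h2eq, htdef]
    field_simp
    ring
  have hiter : iteratedDeriv 2 (abar0 a b c a0) xb
      = iteratedDeriv 2 a0 (phi a b c xb) / (b ^ 5 * t ^ 10)
        - 14 * a * deriv a0 (phi a b c xb) / (b ^ 4 * t ^ 9)
        + 42 * a ^ 2 * a0 (phi a b c xb) / (b ^ 3 * t ^ 8) := by
    rw [iteratedDeriv_succ, iteratedDeriv_one]
    rw [(deriv_abar0_eventually a b c hb a0 ha0 ht).deriv_eq]
    exact hD1deriv.deriv
  have habar : abar0 a b c a0 xb = a0 (phi a b c xb) / (b ^ 3 * t ^ 6) := rfl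
  rw [hiter, hD1, habar]
  unfold D1
  rw [← htdef]
  set F := a0 (phi a b c xb) with hF
  set F1 := deriv a0 (phi a b c xb)
  set F2 := iteratedDeriv 2 a0 (phi a b c xb)
  clear_value t F F1 F2
  have htne : t ≠ 0 := ht
  have hkey : F2 / (b ^ 5 * t ^ 10) - 14 * a * F1 / (b ^ 4 * t ^ 9)
        + 42 * a ^ 2 * F / (b ^ 3 * t ^ 8)
      - 7 / 6 * (F1 / (b ^ 4 * t ^ 8) - 6 * a * F / (b ^ 3 * t ^ 7)) ^ 2
        / (F / (b ^ 3 * t ^ 6))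
      = (F2 - 7 / 6 * F1 ^ 2 / F) / (b ^ 5 * t ^ 10) := by
    field_simp
    ring
  rw [hkey]
  have hpowne : ((b ^ 3 * t ^ 6) ^ 5 : ℝ) ≠ 0 :=
    pow_ne_zero _ (mul_ne_zero (pow_ne_zero _ hb) (pow_ne_zero _ htne))
  have hpow : ((b ^ 5 * t ^ 10) ^ 3 : ℝ) / ((b ^ 3 * t ^ 6) ^ 5) = 1 := by
    rw [div_eq_one_iff_eq hpowne]; ring
  rw [div_pow, div_pow, div_div_div_comm, hpow, div_one]
end
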